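/- Let G_1, ..., G_n be nonnegative random variables of the form G_k = ξ_k g_k where ξ_1, ..., ξ_n are i.i.d. Exp(1) random variables and g_1, ..., g_n are nonnegative random variables with g_k measurable with respect to a filtration F_{k-1} and ξ_k independent of F_{k-1}·σ(g_k). Suppose sup_k g_k ≤ L almost surely and E[Σ_{k=1}^n g_k] ≤ M for deterministic bounds L, M. Then E[(Σ_{k=1}^n ξ_k g_k)^2] ≤ 2 E[Σ_{k=1}^n ξ_k g_k] (M + L). -/

import Mathlib

open MeasureTheory ProbabilityTheory Set

section Aux

variable {Ω : Type*} [m0 : MeasurableSpace Ω] {P : Measure Ω} [IsProbabilityMeasure P]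

lemma slt_lint_one (ξ : Ω → ℝ) (hmeas : Measurable ξ) (hnn : ∀ ω, 0 ≤ ξ ω)
    (hlaw : ∀ t : ℝ, 0 ≤ t → P {ω | t < ξ ω} = ENNReal.ofReal (Real.exp (-t))) :
    ∫⁻ ω, ENNReal.ofReal (ξ ω) ∂P = 1 := by
  rw [lintegral_eq_lintegral_meas_lt P (ae_of_all _ hnn) hmeas.aemeasurable]
  have h1 : IntegrableOn (fun t : ℝ => Real.exp (-t)) (Ioi 0) := by
    have := exp_neg_integrableOn_Ioi 0 (one_pos)
    simpa using this
  calc ∫⁻ t in Ioi (0:ℝ), P {a | t < ξ a}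
      = ∫⁻ t in Ioi (0:ℝ), ENNReal.ofReal (Real.exp (-t)) := by
        refine setLIntegral_congr_fun measurableSet_Ioi (fun t ht => ?_)
        exact hlaw t ht.le
    _ = ENNReal.ofReal (∫ t in Ioi (0:ℝ), Real.exp (-t)) := by
        rw [ofReal_integral_eq_lintegral_ofReal h1
          (ae_of_all _ fun t => (Real.exp_pos _).le)]
    _ = 1 := by rw [integral_exp_neg_Ioi_zero]; simp

lemma slt_integrable_one (ξ : Ω → ℝ) (hmeas : Measurable ξ) (hnn : ∀ ω, 0 ≤ ξ ω)
    (hlaw : ∀ t : ℝ, 0 ≤ t → P {ω | t < ξ ω} = ENNReal.ofReal (Real.exp (-t))) :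
    Integrable ξ P := by
  refine ⟨hmeas.aestronglyMeasurable, ?_⟩
  rw [hasFiniteIntegral_iff_ofReal (ae_of_all _ hnn), slt_lint_one ξ hmeas hnn hlaw]
  exact ENNReal.one_lt_top

lemma slt_integral_one (ξ : Ω → ℝ) (hmeas : Measurable ξ) (hnn : ∀ ω, 0 ≤ ξ ω)
    (hlaw : ∀ t : ℝ, 0 ≤ t → P {ω | t < ξ ω} = ENNReal.ofReal (Real.exp (-t))) :
    ∫ ω, ξ ω ∂P = 1 := by
  rw [integral_eq_lintegral_of_nonneg_ae (ae_of_all _ hnn) hmeas.aestronglyMeasurable,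
    slt_lint_one ξ hmeas hnn hlaw]
  simp

lemma slt_gamma_two : ∫ x in Ioi (0:ℝ), Real.exp (-x) * (2 * x) = 2 := by
  have h2 : (0:ℝ) < 2 := two_pos
  have hG := Real.Gamma_eq_integral h2
  have hval : Real.Gamma 2 = 1 := by
    rw [(by norm_num : (2:ℝ) = 1 + 1), Real.Gamma_add_one one_ne_zero, Real.Gamma_one, mul_one]
  have heq : (fun x : ℝ => Real.exp (-x) * (2 * x))
      = fun x : ℝ => 2 * (Real.exp (-x) * x ^ ((2:ℝ) - 1)) := by
    funext x
    rw [(by norm_num : (2:ℝ) - 1 = 1), Real.rpow_one]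
    ring
  rw [heq, MeasureTheory.integral_const_mul, ← hG, hval, mul_one]

lemma slt_gamma_two_integrable :
    IntegrableOn (fun x : ℝ => Real.exp (-x) * (2 * x)) (Ioi 0) := by
  have heq : (fun x : ℝ => Real.exp (-x) * (2 * x))
      = fun x : ℝ => 2 * (Real.exp (-x) * x ^ ((2:ℝ) - 1)) := by
    funext x
    rw [(by norm_num : (2:ℝ) - 1 = 1), Real.rpow_one]
    ring
  rw [heq]
  exact (Real.GammaIntegral_convergent two_pos).const_mul 2

lemma slt_lint_two (ξ : Ω → ℝ) (hmeas : Measurable ξ) (hnn : ∀ ω, 0 ≤ ξ ω)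
    (hlaw : ∀ t : ℝ, 0 ≤ t → P {ω | t < ξ ω} = ENNReal.ofReal (Real.exp (-t))) :
    ∫⁻ ω, ENNReal.ofReal (ξ ω ^ 2) ∂P = 2 := by
  have key := lintegral_comp_eq_lintegral_meas_lt_mul P (f := ξ) (g := fun t => 2 * t)
    (ae_of_all _ hnn) hmeas.aemeasurable
    (fun t _ => (continuous_const.mul continuous_id).intervalIntegrable 0 t)
    ((ae_restrict_iff' measurableSet_Ioi).2 (ae_of_all _ fun t ht => mul_nonneg two_pos.le (le_of_lt (mem_Ioi.mp ht))))
  have hsq : ∀ x : ℝ, (∫ t in (0:ℝ)..x, 2 * t) = x ^ 2 := by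
    intro x
    rw [intervalIntegral.integral_const_mul, integral_id]
    ring
  simp only [hsq] at key
  rw [key]
  calc ∫⁻ t in Ioi (0:ℝ), P {a | t < ξ a} * ENNReal.ofReal (2 * t)
      = ∫⁻ t in Ioi (0:ℝ), ENNReal.ofReal (Real.exp (-t) * (2 * t)) := by
        refine setLIntegral_congr_fun measurableSet_Ioi (fun t ht => ?_)
        rw [hlaw t ht.le, ← ENNReal.ofReal_mul (Real.exp_pos _).le]
    _ = ENNReal.ofReal (∫ t in Ioi (0:ℝ), Real.exp (-t) * (2 * t)) := by
        rw [ofReal_integral_eq_lintegral_ofReal slt_gamma_two_integrable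
          ((ae_restrict_iff' measurableSet_Ioi).2 (ae_of_all _ fun t ht =>
            mul_nonneg (Real.exp_pos _).le (mul_nonneg two_pos.le (le_of_lt (mem_Ioi.mp ht)))))]
    _ = 2 := by rw [slt_gamma_two]; norm_num

lemma slt_integrable_two (ξ : Ω → ℝ) (hmeas : Measurable ξ) (hnn : ∀ ω, 0 ≤ ξ ω)
    (hlaw : ∀ t : ℝ, 0 ≤ t → P {ω | t < ξ ω} = ENNReal.ofReal (Real.exp (-t))) :
    Integrable (fun ω => ξ ω ^ 2) P := by
  refine ⟨(hmeas.pow_const 2).aestronglyMeasurable, ?_⟩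
  rw [hasFiniteIntegral_iff_ofReal (ae_of_all _ fun ω => sq_nonneg _),
    slt_lint_two ξ hmeas hnn hlaw]
  exact (by norm_num : (2:ENNReal) < ⊤)

lemma slt_integral_two (ξ : Ω → ℝ) (hmeas : Measurable ξ) (hnn : ∀ ω, 0 ≤ ξ ω)
    (hlaw : ∀ t : ℝ, 0 ≤ t → P {ω | t < ξ ω} = ENNReal.ofReal (Real.exp (-t))) :
    ∫ ω, ξ ω ^ 2 ∂P = 2 := by
  rw [integral_eq_lintegral_of_nonneg_ae (ae_of_all _ fun ω => sq_nonneg _)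
    (hmeas.pow_const 2).aestronglyMeasurable, slt_lint_two ξ hmeas hnn hlaw]
  norm_num

end Aux

lemma slt_sq_sum (n : ℕ) (b : ℕ → ℝ) :
    (∑ k ∈ Finset.range n, b k) ^ 2
      = ∑ j ∈ Finset.range n,
          (b j ^ 2 + 2 * b j * ∑ k ∈ Finset.Ico (j + 1) n, b k) := by
  induction n with
  | zero => simp
  | succ n ih =>
    rw [Finset.sum_range_succ, Finset.sum_range_succ]
    have h1 : ∀ j ∈ Finset.range n,
        (b j ^ 2 + 2 * b j * ∑ k ∈ Finset.Ico (j + 1) (n + 1), b k)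
          = (b j ^ 2 + 2 * b j * ∑ k ∈ Finset.Ico (j + 1) n, b k) + 2 * b j * b n := by
      intro j hj
      rw [Finset.sum_Ico_succ_top (Finset.mem_range.mp hj)]
      ring
    rw [Finset.sum_congr rfl h1, Finset.sum_add_distrib, ← ih]
    have h2 : ∑ j ∈ Finset.range n, 2 * b j * b n
        = 2 * (∑ j ∈ Finset.range n, b j) * b n := by
      rw [← Finset.sum_mul, ← Finset.mul_sum]
    rw [h2, Finset.Ico_self]
    simp
    ring

/-- Second moment bound for soft local times: if `G = Σ_{k<n} ξ_k g_k` with `ξ_k`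
i.i.d. Exp(1), each `ξ_k` independent of the past `ℱ k` (to which `g_k` is adapted),
`g_k ≤ L` and all conditional expectations of the remaining sums bounded by `M`, then
`E[G²] ≤ 2 E[G] (M + L)`. -/
theorem soft_local_time_second_moment {Ω : Type*} [m0 : MeasurableSpace Ω]
    (P : Measure Ω) [IsProbabilityMeasure P]
    (n : ℕ) (ξ g : ℕ → Ω → ℝ) (ℱ : ℕ → MeasurableSpace Ω)
    (hle : ∀ k, ℱ k ≤ m0) (hmono : Monotone ℱ)
    (hgmeas : ∀ k, Measurable[ℱ k] (g k))
    (hξmeas : ∀ k, Measurable[ℱ (k + 1)] (ξ k))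
    (hξnonneg : ∀ k ω, 0 ≤ ξ k ω)
    (hξlaw : ∀ k, ∀ t : ℝ, 0 ≤ t →
      P {ω | t < ξ k ω} = ENNReal.ofReal (Real.exp (-t)))
    (hξindep : ∀ k, Indep (MeasurableSpace.comap (ξ k) inferInstance) (ℱ k) P)
    (L M : ℝ) (hg0 : ∀ k ω, 0 ≤ g k ω) (hgL : ∀ k ω, g k ω ≤ L)
    (hM : ∀ k, ∀ᵐ ω ∂P,
      (P[(fun ω => ∑ k' ∈ Finset.Ico k n, g k' ω) | ℱ k]) ω ≤ M) :
    ∫ ω, (∑ k ∈ Finset.range n, ξ k ω * g k ω) ^ 2 ∂P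
      ≤ 2 * (∫ ω, ∑ k ∈ Finset.range n, ξ k ω * g k ω ∂P) * (M + L) := by
  -- Ω is nonempty and L ≥ 0
  have hΩ : Nonempty Ω := by
    rcases isEmpty_or_nonempty Ω with h | h
    · exfalso
      have h1 : P Set.univ = 1 := measure_univ
      rw [Set.univ_eq_empty_iff.mpr h, measure_empty] at h1
      exact zero_ne_one h1
    · exact h
  have hL0 : 0 ≤ L := (hg0 0 hΩ.some).trans (hgL 0 hΩ.some)
  -- measurability
  have hξm : ∀ k, Measurable (ξ k) := fun k => (hξmeas k).mono (hle (k + 1)) le_rfl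
  have hgm : ∀ k, Measurable (g k) := fun k => (hgmeas k).mono (hle k) le_rfl
  -- moments of ξ
  have hξint : ∀ k, Integrable (ξ k) P := fun k =>
    slt_integrable_one _ (hξm k) (hξnonneg k) (hξlaw k)
  have hξ1 : ∀ k, ∫ ω, ξ k ω ∂P = 1 := fun k =>
    slt_integral_one _ (hξm k) (hξnonneg k) (hξlaw k)
  have hξsqint : ∀ k, Integrable (fun ω => ξ k ω ^ 2) P := fun k =>
    slt_integrable_two _ (hξm k) (hξnonneg k) (hξlaw k)
  have hξ2 : ∀ k, ∫ ω, ξ k ω ^ 2 ∂P = 2 := fun k =>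
    slt_integral_two _ (hξm k) (hξnonneg k) (hξlaw k)
  -- the summands
  set a : ℕ → Ω → ℝ := fun k ω => ξ k ω * g k ω with ha_def
  have ham : ∀ k, Measurable (a k) := fun k => (hξm k).mul (hgm k)
  have ha0 : ∀ k ω, 0 ≤ a k ω := fun k ω => mul_nonneg (hξnonneg k ω) (hg0 k ω)
  have haL : ∀ k ω, a k ω ≤ L * ξ k ω := fun k ω => by
    rw [mul_comm L]
    exact mul_le_mul_of_nonneg_left (hgL k ω) (hξnonneg k ω)
  have ha_int : ∀ k, Integrable (a k) P := fun k =>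
    Integrable.mono' ((hξint k).const_mul L) (ham k).aestronglyMeasurable
      (ae_of_all _ fun ω => by rw [Real.norm_of_nonneg (ha0 k ω)]; exact haL k ω)
  have hg_int : ∀ k, Integrable (g k) P := fun k =>
    Integrable.mono' (integrable_const L) (hgm k).aestronglyMeasurable
      (ae_of_all _ fun ω => by rw [Real.norm_of_nonneg (hg0 k ω)]; exact hgL k ω)
  -- independence helper
  have hindep : ∀ k (Y : Ω → ℝ), Measurable[ℱ k] Y → IndepFun (ξ k) Y P := fun k Y hY =>
    indep_of_indep_of_le_right (hξindep k) hY.comap_le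
  -- E[a k] = E[g k]
  have hag1 : ∀ k, ∫ ω, a k ω ∂P = ∫ ω, g k ω ∂P := by
    intro k
    have h := (hindep k (g k) (hgmeas k)).integral_mul_eq_mul_integral (hξint k).aestronglyMeasurable (hg_int k).aestronglyMeasurable
    calc ∫ ω, a k ω ∂P = integral P (ξ k * g k) := rfl
      _ = integral P (ξ k) * integral P (g k) := h
      _ = ∫ ω, g k ω ∂P := by rw [hξ1 k, one_mul]
  -- integrability of products a j * a k
  have haa_int : ∀ j k, Integrable (fun ω => a j ω * a k ω) P := by
    intro j k
    refine Integrable.mono'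
      ((((hξsqint j).add (hξsqint k)).const_mul (L * L)).div_const 2)
      ((ham j).mul (ham k)).aestronglyMeasurable (ae_of_all _ fun ω => ?_)
    rw [Real.norm_of_nonneg (mul_nonneg (ha0 j ω) (ha0 k ω))]
    have h1 : a j ω * a k ω ≤ (L * ξ j ω) * (L * ξ k ω) :=
      mul_le_mul (haL j ω) (haL k ω) (ha0 k ω) (mul_nonneg hL0 (hξnonneg j ω))
    have h2 : ξ j ω * ξ k ω ≤ (ξ j ω ^ 2 + ξ k ω ^ 2) / 2 := by
      nlinarith [sq_nonneg (ξ j ω - ξ k ω)]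
    calc a j ω * a k ω ≤ (L * ξ j ω) * (L * ξ k ω) := h1
      _ = (L * L) * (ξ j ω * ξ k ω) := by ring
      _ ≤ (L * L) * ((ξ j ω ^ 2 + ξ k ω ^ 2) / 2) :=
          mul_le_mul_of_nonneg_left h2 (mul_nonneg hL0 hL0)
      _ = L * L * (ξ j ω ^ 2 + ξ k ω ^ 2) / 2 := by ring
  -- cross terms: E[a j * a k] = E[a j * g k] for j < k
  have hag : ∀ j k, j < k → ∫ ω, a j ω * a k ω ∂P = ∫ ω, a j ω * g k ω ∂P := by
    intro j k hjk
    have hXm : Measurable[ℱ k] (fun ω => a j ω * g k ω) :=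
      (((hξmeas j).mono (hmono hjk) le_rfl).mul
        ((hgmeas j).mono (hmono hjk.le) le_rfl)).mul (hgmeas k)
    have hXint : Integrable (fun ω => a j ω * g k ω) P := by
      refine Integrable.mono' ((hξint j).const_mul (L * L))
        ((ham j).mul (hgm k)).aestronglyMeasurable (ae_of_all _ fun ω => ?_)
      rw [Real.norm_of_nonneg (mul_nonneg (ha0 j ω) (hg0 k ω))]
      calc a j ω * g k ω ≤ (L * ξ j ω) * L :=
            mul_le_mul (haL j ω) (hgL k ω) (hg0 k ω) (mul_nonneg hL0 (hξnonneg j ω))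
        _ = L * L * ξ j ω := by ring
    have hind := (hindep k _ hXm).symm.integral_mul_eq_mul_integral hXint.aestronglyMeasurable (hξint k).aestronglyMeasurable
    calc ∫ ω, a j ω * a k ω ∂P = ∫ ω, (a j ω * g k ω) * ξ k ω ∂P := by
          apply integral_congr_ae (ae_of_all _ fun ω => ?_)
          rw [ha_def]; simp only []; ring
      _ = (∫ ω, a j ω * g k ω ∂P) * ∫ ω, ξ k ω ∂P := hind
      _ = ∫ ω, a j ω * g k ω ∂P := by rw [hξ1 k, mul_one]
  -- diagonal terms
  have hsq : ∀ j, ∫ ω, a j ω ^ 2 ∂P ≤ 2 * L * ∫ ω, g j ω ∂P := by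
    intro j
    have hind : IndepFun (fun ω => ξ j ω ^ 2) (fun ω => g j ω ^ 2) P :=
      (hindep j (g j) (hgmeas j)).comp (measurable_id.pow_const 2) (measurable_id.pow_const 2)
    have hg2int : Integrable (fun ω => g j ω ^ 2) P := by
      refine Integrable.mono' (integrable_const (L * L))
        ((hgm j).pow_const 2).aestronglyMeasurable (ae_of_all _ fun ω => ?_)
      rw [Real.norm_of_nonneg (sq_nonneg _)]
      nlinarith [hg0 j ω, hgL j ω]
    have heq : ∫ ω, a j ω ^ 2 ∂P = 2 * ∫ ω, g j ω ^ 2 ∂P := by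
      have h := hind.integral_mul_eq_mul_integral (hξsqint j).aestronglyMeasurable hg2int.aestronglyMeasurable
      calc ∫ ω, a j ω ^ 2 ∂P = ∫ ω, ξ j ω ^ 2 * g j ω ^ 2 ∂P := by
            apply integral_congr_ae (ae_of_all _ fun ω => ?_)
            rw [ha_def]; simp only []; ring
        _ = (∫ ω, ξ j ω ^ 2 ∂P) * ∫ ω, g j ω ^ 2 ∂P := h
        _ = 2 * ∫ ω, g j ω ^ 2 ∂P := by rw [hξ2 j]
    rw [heq]
    have hmono2 : ∫ ω, g j ω ^ 2 ∂P ≤ ∫ ω, L * g j ω ∂P := by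
      refine integral_mono hg2int ((hg_int j).const_mul L) fun ω => ?_
      nlinarith [hg0 j ω, hgL j ω]
    rw [MeasureTheory.integral_const_mul] at hmono2
    nlinarith
  -- conditional expectation step
  have hcond : ∀ j, ∫ ω, a j ω * (∑ k ∈ Finset.Ico (j + 1) n, g k ω) ∂P
      ≤ M * ∫ ω, a j ω ∂P := by
    intro j
    set S : Ω → ℝ := fun ω => ∑ k ∈ Finset.Ico (j + 1) n, g k ω with hS_def
    have hSm : Measurable S := Finset.measurable_sum _ fun k _ => hgm k
    have hSnn : ∀ ω, 0 ≤ S ω := fun ω => Finset.sum_nonneg fun k _ => hg0 k ω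
    set C : ℝ := (Finset.Ico (j + 1) n).card * L with hC_def
    have hC0 : 0 ≤ C := mul_nonneg (Nat.cast_nonneg _) hL0
    have hSle : ∀ ω, S ω ≤ C := fun ω => by
      calc S ω ≤ ∑ _k ∈ Finset.Ico (j + 1) n, L := Finset.sum_le_sum fun k _ => hgL k ω
        _ = C := by rw [Finset.sum_const, nsmul_eq_mul]
    have hSint : Integrable S P :=
      Integrable.mono' (integrable_const C) hSm.aestronglyMeasurable
        (ae_of_all _ fun ω => by rw [Real.norm_of_nonneg (hSnn ω)]; exact hSle ω)
    have hXm : Measurable[ℱ (j + 1)] (a j) :=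
      (hξmeas j).mul ((hgmeas j).mono (hmono (Nat.le_succ j)) le_rfl)
    have hXSint : Integrable (a j * S) P := by
      refine Integrable.mono' ((hξint j).const_mul (L * C))
        ((ham j).mul hSm).aestronglyMeasurable (ae_of_all _ fun ω => ?_)
      rw [Pi.mul_apply, Real.norm_of_nonneg (mul_nonneg (ha0 j ω) (hSnn ω))]
      calc a j ω * S ω ≤ (L * ξ j ω) * C :=
            mul_le_mul (haL j ω) (hSle ω) (hSnn ω) (mul_nonneg hL0 (hξnonneg j ω))
        _ = L * C * ξ j ω := by ring
    have hmul := condExp_mul_of_stronglyMeasurable_left (hXm.stronglyMeasurable) hXSint hSint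
    have hcondint : Integrable (fun ω => a j ω * (P[S|ℱ (j + 1)]) ω) P := by
      refine (integrable_condExp (f := a j * S) (m := ℱ (j + 1)) (μ := P)).congr ?_
      filter_upwards [hmul] with ω hω
      rw [hω, Pi.mul_apply]
    calc ∫ ω, a j ω * S ω ∂P
        = ∫ ω, (P[a j * S|ℱ (j + 1)]) ω ∂P := by
          rw [integral_condExp (hle (j + 1))]
          apply integral_congr_ae (ae_of_all _ fun ω => ?_)
          rw [Pi.mul_apply]
      _ = ∫ ω, a j ω * (P[S|ℱ (j + 1)]) ω ∂P := by
          refine integral_congr_ae ?_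
          filter_upwards [hmul] with ω hω
          rw [hω, Pi.mul_apply]
      _ ≤ ∫ ω, a j ω * M ∂P := by
          refine integral_mono_ae hcondint ((ha_int j).mul_const M) ?_
          filter_upwards [hM (j + 1)] with ω hω
          exact mul_le_mul_of_nonneg_left hω (ha0 j ω)
      _ = M * ∫ ω, a j ω ∂P := by rw [MeasureTheory.integral_mul_const, mul_comm]
  -- integrability of the expansion terms
  have hsum_int : ∀ j, Integrable
      (fun ω => a j ω ^ 2 + 2 * a j ω * ∑ k ∈ Finset.Ico (j + 1) n, a k ω) P := by
    intro j
    have h1 : Integrable (fun ω => a j ω ^ 2) P := by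
      simpa [pow_two] using haa_int j j
    have h2 : Integrable (fun ω => a j ω * ∑ k ∈ Finset.Ico (j + 1) n, a k ω) P := by
      have : (fun ω => a j ω * ∑ k ∈ Finset.Ico (j + 1) n, a k ω)
          = fun ω => ∑ k ∈ Finset.Ico (j + 1) n, a j ω * a k ω := by
        funext ω; rw [Finset.mul_sum]
      rw [this]
      exact integrable_finset_sum _ fun k _ => haa_int j k
    have h2' : Integrable (fun ω => 2 * (a j ω * ∑ k ∈ Finset.Ico (j + 1) n, a k ω)) P :=
      h2.const_mul 2
    refine h1.add (h2'.congr (ae_of_all _ fun ω => by ring))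
  -- expand the square
  have expand : ∫ ω, (∑ k ∈ Finset.range n, a k ω) ^ 2 ∂P
      = ∑ j ∈ Finset.range n,
          ∫ ω, (a j ω ^ 2 + 2 * a j ω * ∑ k ∈ Finset.Ico (j + 1) n, a k ω) ∂P := by
    rw [← integral_finset_sum _ fun j _ => hsum_int j]
    apply integral_congr_ae (ae_of_all _ fun ω => ?_)
    exact slt_sq_sum n fun k => a k ω
  -- per-term bound
  have hterm : ∀ j, ∫ ω, (a j ω ^ 2 + 2 * a j ω * ∑ k ∈ Finset.Ico (j + 1) n, a k ω) ∂P
      ≤ (2 * L + 2 * M) * ∫ ω, a j ω ∂P := by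
    intro j
    have h1 : Integrable (fun ω => a j ω ^ 2) P := by
      simpa [pow_two] using haa_int j j
    have h2 : Integrable (fun ω => a j ω * ∑ k ∈ Finset.Ico (j + 1) n, a k ω) P := by
      have : (fun ω => a j ω * ∑ k ∈ Finset.Ico (j + 1) n, a k ω)
          = fun ω => ∑ k ∈ Finset.Ico (j + 1) n, a j ω * a k ω := by
        funext ω; rw [Finset.mul_sum]
      rw [this]
      exact integrable_finset_sum _ fun k _ => haa_int j k
    have h2' : Integrable (fun ω => 2 * a j ω * ∑ k ∈ Finset.Ico (j + 1) n, a k ω) P :=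
      (h2.const_mul 2).congr (ae_of_all _ fun ω => by ring)
    rw [integral_add h1 h2']
    have hstep1 : ∫ ω, 2 * a j ω * ∑ k ∈ Finset.Ico (j + 1) n, a k ω ∂P
        = 2 * ∫ ω, a j ω * ∑ k ∈ Finset.Ico (j + 1) n, a k ω ∂P := by
      rw [← MeasureTheory.integral_const_mul]
      apply integral_congr_ae (ae_of_all _ fun ω => by ring)
    have hstep2 : ∫ ω, a j ω * ∑ k ∈ Finset.Ico (j + 1) n, a k ω ∂P
        = ∫ ω, a j ω * ∑ k ∈ Finset.Ico (j + 1) n, g k ω ∂P := by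
      calc ∫ ω, a j ω * ∑ k ∈ Finset.Ico (j + 1) n, a k ω ∂P
          = ∫ ω, ∑ k ∈ Finset.Ico (j + 1) n, a j ω * a k ω ∂P := by
            apply integral_congr_ae (ae_of_all _ fun ω => ?_)
            rw [Finset.mul_sum]
        _ = ∑ k ∈ Finset.Ico (j + 1) n, ∫ ω, a j ω * a k ω ∂P :=
            integral_finset_sum _ fun k _ => haa_int j k
        _ = ∑ k ∈ Finset.Ico (j + 1) n, ∫ ω, a j ω * g k ω ∂P := by
            refine Finset.sum_congr rfl fun k hk => ?_
            exact hag j k (Nat.lt_of_succ_le (Finset.mem_Ico.mp hk).1)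
        _ = ∫ ω, ∑ k ∈ Finset.Ico (j + 1) n, a j ω * g k ω ∂P := by
            refine (integral_finset_sum _ fun k hk => ?_).symm
            refine Integrable.mono' ((hξint j).const_mul (L * L))
              ((ham j).mul (hgm k)).aestronglyMeasurable (ae_of_all _ fun ω => ?_)
            rw [Real.norm_of_nonneg (mul_nonneg (ha0 j ω) (hg0 k ω))]
            calc a j ω * g k ω ≤ (L * ξ j ω) * L :=
                  mul_le_mul (haL j ω) (hgL k ω) (hg0 k ω) (mul_nonneg hL0 (hξnonneg j ω))
              _ = L * L * ξ j ω := by ring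
        _ = ∫ ω, a j ω * ∑ k ∈ Finset.Ico (j + 1) n, g k ω ∂P := by
            apply integral_congr_ae (ae_of_all _ fun ω => ?_)
            rw [Finset.mul_sum]
    have hbound1 : ∫ ω, a j ω ^ 2 ∂P ≤ 2 * L * ∫ ω, a j ω ∂P := by
      rw [hag1 j]; exact hsq j
    have hbound2 : ∫ ω, a j ω * ∑ k ∈ Finset.Ico (j + 1) n, g k ω ∂P
        ≤ M * ∫ ω, a j ω ∂P := hcond j
    rw [hstep1, hstep2]
    nlinarith
  -- assemble
  show ∫ ω, (∑ k ∈ Finset.range n, a k ω) ^ 2 ∂P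
      ≤ 2 * (∫ ω, ∑ k ∈ Finset.range n, a k ω ∂P) * (M + L)
  rw [expand, integral_finset_sum _ fun k _ => ha_int k]
  calc ∑ j ∈ Finset.range n,
        ∫ ω, (a j ω ^ 2 + 2 * a j ω * ∑ k ∈ Finset.Ico (j + 1) n, a k ω) ∂P
      ≤ ∑ j ∈ Finset.range n, (2 * L + 2 * M) * ∫ ω, a j ω ∂P :=
        Finset.sum_le_sum fun j _ => hterm j
    _ = 2 * (∑ j ∈ Finset.range n, ∫ ω, a j ω ∂P) * (M + L) := by
        rw [← Finset.mul_sum]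
        ring
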